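/- arXiv:1409.7525 — 3 statements merged into one kernel-verified Lean document; each statement's English description precedes it below -/
import Mathlib

section
/- For all natural numbers k and l, (k+l)! / ((2(k+l))! · l!) = 4^{-k} · 1 / ((2l)! · (l + 1/2)_k), where (a)_k denotes the Pochhammer symbol (rising factorial) (a)_k = a(a+1)···(a+k-1). -/
theorem factorial_ratio_pochhammer (k l : ℕ) :
    ((k + l).factorial : ℝ) / ((2 * (k + l)).factorial * l.factorial) =
      (4 : ℝ) ^ (-(k : ℤ)) *
        (1 / ((2 * l).factorial * (ascPochhammer ℝ k).eval ((l : ℝ) + 1 / 2))) := by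
  induction k with
  | zero =>
    have hf3 : (0 : ℝ) < l.factorial := by positivity
    simp
    field_simp
  | succ k ih =>
    have hP : 0 < (ascPochhammer ℝ k).eval ((l : ℝ) + 1 / 2) :=
      ascPochhammer_pos _ _ (by positivity)
    have hf1 : (0 : ℝ) < (2 * (k + l)).factorial := by positivity
    have hf2 : (0 : ℝ) < (2 * l).factorial := by positivity
    have hf3 : (0 : ℝ) < l.factorial := by positivity
    have h1 : k + 1 + l = (k + l) + 1 := by ring
    have h2 : 2 * (k + l + 1) = (2 * (k + l) + 1) + 1 := by ring
    rw [h1, h2, Nat.factorial_succ, Nat.factorial_succ, Nat.factorial_succ,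
      ascPochhammer_succ_eval]
    rw [zpow_neg, zpow_natCast] at ih ⊢
    set P := Polynomial.eval ((l : ℝ) + 1 / 2) (ascPochhammer ℝ k) with hPdef
    field_simp at ih ⊢
    push_cast
    linear_combination (4 * ((k : ℝ) + l + 1) * (2 * k + 2 * l + 1)) * ih
end

section
/- For every real k > 0 and positive integer ν, ν²·(1 − sin(k/ν)/(k/ν)) = k² ∫_{[0,1]²} u² v · sinc(k u v / ν) du dv, where sinc(x) = sin(x)/x for x ≠ 0 and sinc(0) = 1. -/
open MeasureTheory intervalIntegral

/-- `sinc x = sin x / x` for `x ≠ 0`, and `sinc 0 = 1`. -/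
noncomputable def sinc (x : ℝ) : ℝ := if x = 0 then 1 else Real.sin x / x

theorem sin_ratio_eq_double_integral (k : ℝ) (hk : 0 < k) (ν : ℕ) (hν : 0 < ν) :
    (ν : ℝ) ^ 2 * (1 - Real.sin (k / ν) / (k / ν)) =
      k ^ 2 * ∫ u in (0:ℝ)..1, ∫ v in (0:ℝ)..1, u ^ 2 * v * sinc (k * u * v / ν) := by
  have hν' : (ν : ℝ) ≠ 0 := Nat.cast_ne_zero.2 hν.ne'
  have hk' : k ≠ 0 := hk.ne'
  have inner : ∀ u : ℝ, (∫ v in (0:ℝ)..1, u ^ 2 * v * sinc (k * u * v / ν)) =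
      ((ν : ℝ) / k) ^ 2 * (1 - Real.cos (k * u / ν)) := by
    intro u
    rcases eq_or_ne u 0 with rfl | hu
    · simp [sinc]
    · set a := k * u / ν with ha
      have ha0 : a ≠ 0 := by
        rw [ha]
        exact div_ne_zero (mul_ne_zero hk' hu) hν'
      have hcong : ∀ v : ℝ,
          u ^ 2 * v * sinc (k * u * v / ν) = (u ^ 2 / a) * Real.sin (v * a) := by
        intro v
        rcases eq_or_ne v 0 with rfl | hv
        · simp [sinc]
        · have hav : k * u * v / ν = a * v := by rw [ha]; ring
          rw [hav, sinc, if_neg (mul_ne_zero ha0 hv)]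
          field_simp
      simp_rw [hcong]
      rw [intervalIntegral.integral_const_mul,
        intervalIntegral.integral_comp_mul_right Real.sin ha0]
      simp only [integral_sin, zero_mul, one_mul, Real.cos_zero, smul_eq_mul]
      rw [ha]
      field_simp
  simp_rw [inner]
  have hcos : ∀ u : ℝ, Real.cos (k * u / ν) = Real.cos (u * (k / ν)) := by
    intro u; ring_nf
  simp_rw [hcos]
  have hint : IntervalIntegrable (fun x : ℝ => Real.cos (x * (k / ν))) volume 0 1 :=
    (Continuous.intervalIntegrable (by continuity) 0 1)
  rw [intervalIntegral.integral_const_mul,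
    intervalIntegral.integral_sub intervalIntegrable_const hint,
    intervalIntegral.integral_comp_mul_right Real.cos (div_ne_zero hk' hν')]
  simp only [integral_cos, zero_mul, one_mul, Real.sin_zero, smul_eq_mul,
    intervalIntegral.integral_const, smul_eq_mul, mul_one, sub_zero]
  field_simp
end

section
/- Let X be a nontrivial complex Hilbert space, A ∈ L(X) bounded and self-adjoint with spectrum σ(A), R > ‖A‖, and f : U_R(0) → ℂ holomorphic on the open disc of radius R. Then the series Σ_{k=0}^∞ (f^{(k)}(0)/k!) A^k is absolutely convergent in the operator norm and equals f(A), the continuous functional calculus applied to f restricted to σ(A). -/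
set_option maxHeartbeats 1000000 in
/-- Holomorphic functional calculus: for a bounded self-adjoint operator `A`
and `f` holomorphic on a disc of radius `R > ‖A‖`, the Taylor series of `f`
applied to `A` is absolutely summable in operator norm and sums to `f(A)`
(continuous functional calculus). -/
theorem holomorphic_functional_calculus
    {H : Type*} [NormedAddCommGroup H] [InnerProductSpace ℂ H] [CompleteSpace H]
    [Nontrivial H]
    (A : H →L[ℂ] H) (hA : IsSelfAdjoint A)
    (R : ℝ) (hR : ‖A‖ < R)
    (f : ℂ → ℂ) (hf : DifferentiableOn ℂ f (Metric.ball 0 R)) :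
    Summable (fun k : ℕ => ‖(iteratedDeriv k f 0 / (k.factorial : ℂ)) • A ^ k‖) ∧
    cfc f A = ∑' k : ℕ, (iteratedDeriv k f 0 / (k.factorial : ℂ)) • A ^ k := by
  haveI : IsStarNormal A := hA.isStarNormal
  set a : ℕ → ℂ := fun k => iteratedDeriv k f 0 / (k.factorial : ℂ) with ha_def
  -- choose r between ‖A‖ and R
  set r : ℝ := (‖A‖ + R) / 2 with hr_def
  have hAr : ‖A‖ < r := by simp only [hr_def]; linarith
  have hrR : r < R := by simp only [hr_def]; linarith
  have hr0 : 0 < r := lt_of_le_of_lt (norm_nonneg A) hAr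
  -- the Taylor series of f converges at each point of the ball; in particular at r
  have htaylor : ∀ z : ℂ, z ∈ Metric.ball (0 : ℂ) R →
      HasSum (fun k : ℕ => a k * z ^ k) (f z) := by
    intro z hz
    have h := Complex.hasSum_taylorSeries_on_ball hf hz
    refine h.congr_fun fun k => ?_
    simp only [ha_def, sub_zero, smul_eq_mul]
    ring
  have hrball : (r : ℂ) ∈ Metric.ball (0 : ℂ) R := by
    simp only [Metric.mem_ball, dist_zero_right, Complex.norm_real,
      Real.norm_eq_abs, abs_of_pos hr0]
    exact hrR
  have hsum_r : Summable (fun k : ℕ => ‖a k‖ * r ^ k) := by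
    have h := (htaylor _ hrball).summable
    have h' : Summable (fun k : ℕ => ‖a k * (r : ℂ) ^ k‖) := summable_norm_iff.mpr h
    refine h'.congr fun k => ?_
    rw [norm_mul, norm_pow, Complex.norm_real, Real.norm_eq_abs, abs_of_pos hr0]
  -- Part 1 : absolute summability
  have hbound : ∀ k : ℕ, ‖a k • A ^ k‖ ≤ ‖a k‖ * r ^ k := by
    intro k
    calc ‖a k • A ^ k‖ = ‖a k‖ * ‖A ^ k‖ := norm_smul _ _
      _ ≤ ‖a k‖ * ‖A‖ ^ k := by
          gcongr
          exact norm_pow_le A k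
      _ ≤ ‖a k‖ * r ^ k :=
          mul_le_mul_of_nonneg_left (pow_le_pow_left₀ (norm_nonneg A) hAr.le k) (norm_nonneg _)
  have h1 : Summable (fun k : ℕ => ‖a k • A ^ k‖) :=
    Summable.of_nonneg_of_le (fun k => norm_nonneg _) hbound hsum_r
  refine ⟨h1, ?_⟩
  -- Part 2
  have hT : Summable (fun k : ℕ => a k • A ^ k) := h1.of_norm
  -- spectrum is inside the ball of radius ‖A‖ ≤ r < R
  have hspec : ∀ z ∈ spectrum ℂ A, ‖z‖ ≤ ‖A‖ := fun z hz =>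
    spectrum.norm_le_norm_of_mem hz
  have hspec_ball : spectrum ℂ A ⊆ Metric.ball (0 : ℂ) R := by
    intro z hz
    simp only [Metric.mem_ball, dist_zero_right]
    exact lt_of_le_of_lt (hspec z hz) hR
  have hfc : ContinuousOn f (spectrum ℂ A) :=
    (hf.continuousOn).mono hspec_ball
  -- partial sums as cfc of polynomials
  have hpoly : ∀ n : ℕ, cfc (fun z : ℂ => ∑ k ∈ Finset.range n, a k * z ^ k) A
      = ∑ k ∈ Finset.range n, a k • A ^ k := by
    intro n
    have heq : (fun z : ℂ => ∑ k ∈ Finset.range n, a k * z ^ k)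
        = ∑ k ∈ Finset.range n, (fun z : ℂ => a k * z ^ k) := by
      ext z; simp
    rw [heq, cfc_sum (fun k (z : ℂ) => a k * z ^ k) A (Finset.range n)
      (fun i _ => by fun_prop)]
    refine Finset.sum_congr rfl fun k _ => ?_
    rw [cfc_const_mul (a k) (fun z : ℂ => z ^ k) A (by fun_prop), cfc_pow_id A k]
  -- tail bound
  set c : ℕ → ℝ := fun k => ‖a k‖ * r ^ k with hc_def
  have hc0 : ∀ k, 0 ≤ c k := fun k =>
    mul_nonneg (norm_nonneg _) (pow_nonneg hr0.le _)
  set t : ℕ → ℝ := fun n => ∑' k : ℕ, c (k + n) with ht_def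
  have ht0 : ∀ n, 0 ≤ t n := fun n => tsum_nonneg fun k => hc0 _
  have htail : ∀ n : ℕ, ‖cfc f A - ∑ k ∈ Finset.range n, a k • A ^ k‖ ≤ t n := by
    intro n
    rw [← hpoly n, ← cfc_sub f _ A hfc (by fun_prop)]
    refine norm_cfc_le (ht0 n) fun z hz => ?_
    have hzb : z ∈ Metric.ball (0 : ℂ) R := hspec_ball hz
    have hz_sum := htaylor z hzb
    have hzr : ‖z‖ ≤ r := (hspec z hz).trans hAr.le
    have hsum_z : Summable (fun k : ℕ => a k * z ^ k) := hz_sum.summable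
    have hsplit : (∑ k ∈ Finset.range n, a k * z ^ k)
        + ∑' k : ℕ, a (k + n) * z ^ (k + n) = f z := by
      rw [← hz_sum.tsum_eq]
      exact Summable.sum_add_tsum_nat_add n hsum_z
    have : f z - ∑ k ∈ Finset.range n, a k * z ^ k
        = ∑' k : ℕ, a (k + n) * z ^ (k + n) := by
      rw [← hsplit]; ring
    rw [this]
    have hsum_tail : Summable (fun k : ℕ => ‖a (k + n) * z ^ (k + n)‖) := by
      have := (summable_norm_iff.mpr hsum_z)
      exact (summable_nat_add_iff n).mpr this
    have hsum_ctail : Summable (fun k : ℕ => c (k + n)) :=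
      (summable_nat_add_iff n).mpr hsum_r
    calc ‖∑' k : ℕ, a (k + n) * z ^ (k + n)‖
        ≤ ∑' k : ℕ, ‖a (k + n) * z ^ (k + n)‖ := norm_tsum_le_tsum_norm hsum_tail
      _ ≤ ∑' k : ℕ, c (k + n) := by
          refine Summable.tsum_le_tsum (fun k => ?_) hsum_tail hsum_ctail
          rw [norm_mul, norm_pow]
          exact mul_le_mul_of_nonneg_left (pow_le_pow_left₀ (norm_nonneg z) hzr _)
            (norm_nonneg _)
      _ = t n := rfl
  -- t n → 0
  have ht_lim : Filter.Tendsto t Filter.atTop (nhds 0) := tendsto_sum_nat_add c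
  -- partial sums tend to cfc f A
  have hlim1 : Filter.Tendsto (fun n => ∑ k ∈ Finset.range n, a k • A ^ k)
      Filter.atTop (nhds (cfc f A)) := by
    rw [tendsto_iff_norm_sub_tendsto_zero]
    refine squeeze_zero (fun n => norm_nonneg _) (fun n => ?_) ht_lim
    rw [norm_sub_rev]
    exact htail n
  have hlim2 : Filter.Tendsto (fun n => ∑ k ∈ Finset.range n, a k • A ^ k)
      Filter.atTop (nhds (∑' k : ℕ, a k • A ^ k)) :=
    hT.hasSum.tendsto_sum_nat
  exact tendsto_nhds_unique hlim1 hlim2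
end
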